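/- Let F be a rooted directed forest with a branching k-path vertex cover P, let u be a branching vertex of F such that no directed path from u to a leaf contains a branching vertex other than u, and suppose every such path from u to a leaf has at most k+1 vertices. Let b ≥ 2 be the number of leaves reachable from u, and let H be the forest obtained by deleting all vertices strictly below u. Then Q = (P ∩ V(H)) ∪ {u} is a branching k-path vertex cover of H, |P| ≥ |Q| + b − 1, and H has at least n − bk vertices where n = |V(F)|. -/

import Mathlib

/-- A rooted directed forest on vertex type `V`, given by a parent map
(edges are oriented from parent to child, i.e. away from the roots),
with no directed cycles. A root is a vertex with no parent. -/
structure RDForest (V : Type) where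
  parent : V → Option V
  acyclic : ∀ v : V, ¬ Relation.TransGen (fun a b => parent b = some a) v v

namespace RDForest

variable {V : Type}

/-- Out-degree of a vertex: its number of children. -/
noncomputable def outDeg (F : RDForest V) (v : V) : ℕ :=
  Nat.card {w | F.parent w = some v}

/-- A leaf is a vertex of out-degree 0. -/
def IsLeaf (F : RDForest V) (v : V) : Prop := F.outDeg v = 0

/-- A branching vertex is a vertex of out-degree at least 2. -/
def IsBranching (F : RDForest V) (v : V) : Prop := 2 ≤ F.outDeg v

/-- `p 0, p 1, …, p (k-1)` is a directed path on `k` vertices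
(each successive vertex is a child of the previous one). -/
def IsDPath (F : RDForest V) (k : ℕ) (p : ℕ → V) : Prop :=
  ∀ i, i + 1 < k → F.parent (p (i + 1)) = some (p i)

/-- A branching `k`-path vertex cover of a rooted directed forest:
all leaves belong to `P`, and every directed path on `k` vertices contains
a branching vertex or a vertex of `P`. -/
def IsBPVC (F : RDForest V) (k : ℕ) (P : Set V) : Prop :=
  (∀ v, F.IsLeaf v → v ∈ P) ∧
  ∀ p : ℕ → V, F.IsDPath k p →
    (∃ i < k, F.IsBranching (p i)) ∨ (∃ i < k, p i ∈ P)

end RDForest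

private lemma path_of_rtg {α : Type*} {r : α → α → Prop} {a b : α}
    (h : Relation.ReflTransGen r a b) :
    ∃ m, ∃ p : ℕ → α, p 0 = a ∧ p m = b ∧ ∀ i < m, r (p i) (p (i+1)) := by
  induction h with
  | refl => exact ⟨0, fun _ => a, rfl, rfl, by omega⟩
  | @tail c d hac hcd ih =>
    obtain ⟨m, p, h0, hm, hstep⟩ := ih
    refine ⟨m + 1, fun i => if i ≤ m then p i else d, by simp [h0], by simp, ?_⟩
    intro i hi
    rcases lt_or_eq_of_le (Nat.lt_succ_iff.mp hi) with h' | h'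
    · simpa [Nat.le_of_lt h', Nat.succ_le_of_lt h'] using hstep i h'
    · subst h'; simpa [hm] using hcd

private lemma exists_leaf {V : Type} [Finite V] (F : RDForest V) (x : V) :
    ∃ l, Relation.ReflTransGen (fun a c => F.parent c = some a) x l ∧ F.IsLeaf l := by
  have hwf : WellFounded (fun y x : V =>
      Relation.TransGen (fun a c => F.parent c = some a) x y) := by
    haveI : IsTrans V (fun y x : V =>
        Relation.TransGen (fun a c => F.parent c = some a) x y) :=
      ⟨fun a b c h1 h2 => h2.trans h1⟩
    haveI : IsIrrefl V (fun y x : V =>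
        Relation.TransGen (fun a c => F.parent c = some a) x y) :=
      ⟨fun a => F.acyclic a⟩
    exact Finite.wellFounded_of_trans_of_irrefl _
  induction x using hwf.induction with
  | _ x ih =>
    by_cases hx : F.IsLeaf x
    · exact ⟨x, .refl, hx⟩
    · have hne : Nonempty {w | F.parent w = some x} := by
        rw [RDForest.IsLeaf, RDForest.outDeg] at hx
        exact (Nat.card_ne_zero.mp hx).1
      obtain ⟨y, hy⟩ := hne
      obtain ⟨l, hl, hleaf⟩ := ih y (Relation.TransGen.single hy)
      exact ⟨l, Relation.ReflTransGen.head hy hl, hleaf⟩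

private lemma ncard_biUnion_le' {α β : Type*} [Finite β] (s : Finset α) (t : α → Set β) :
    (⋃ i ∈ s, t i).ncard ≤ ∑ i ∈ s, (t i).ncard := by
  classical
  induction s using Finset.induction_on with
  | empty => simp
  | @insert a s ha ih =>
    rw [Finset.sum_insert ha]
    refine le_trans (le_of_eq (by rw [Finset.set_biUnion_insert])) ?_
    exact le_trans (Set.ncard_union_le _ _) (Nat.add_le_add_left ih _)

/-- Deleting all strict descendants of a deepest branching vertex `u` (all of whose
paths to leaves contain no other branching vertex and have at most `k+1` vertices):
`Q = (P ∩ V(H)) ∪ {u}` is a branching `k`-path vertex cover of the resulting forest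
`H`, `|P| ≥ |Q| + b - 1` where `b ≥ 2` is the number of leaves below `u`, and `H`
has at least `n - bk` vertices. -/
theorem stmt11 {V : Type} [Fintype V] (F : RDForest V) (k : ℕ) (hk : 2 ≤ k)
    (P : Set V) (hP : F.IsBPVC k P) (u : V) (hu : F.IsBranching u)
    (hpaths : ∀ (m : ℕ) (p : ℕ → V), p 0 = u →
      (∀ i, i < m → F.parent (p (i + 1)) = some (p i)) → F.IsLeaf (p m) →
      m ≤ k ∧ ∀ i, 0 < i → i ≤ m → ¬ F.IsBranching (p i))
    (b : ℕ)
    (hb : b = Nat.card {x | Relation.ReflTransGen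
      (fun a c => F.parent c = some a) u x ∧ F.IsLeaf x})
    (hb2 : 2 ≤ b)
    (H : RDForest {x : V // ¬ Relation.TransGen (fun a c => F.parent c = some a) u x})
    (hH : ∀ x y : {x : V // ¬ Relation.TransGen (fun a c => F.parent c = some a) u x},
      H.parent y = some x ↔ F.parent y.1 = some x.1) :
    H.IsBPVC k ({x | x.1 ∈ P} ∪ {⟨u, F.acyclic u⟩}) ∧
    ({x | x.1 ∈ P} ∪ {⟨u, F.acyclic u⟩} :
      Set {x : V // ¬ Relation.TransGen (fun a c => F.parent c = some a) u x}).ncard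
      + (b - 1) ≤ P.ncard ∧
    Nat.card V - b * k ≤
      Nat.card {x : V // ¬ Relation.TransGen (fun a c => F.parent c = some a) u x} := by
  classical
  have hchild : ∀ v w : V, ¬ Relation.TransGen (fun a c => F.parent c = some a) u v →
      v ≠ u → F.parent w = some v →
      ¬ Relation.TransGen (fun a c => F.parent c = some a) u w := by
    intro v w hv hvu hp hw
    obtain ⟨c, hc1, hc2⟩ := (Relation.TransGen.tail'_iff).mp hw
    have hcv : c = v := by
      have : some c = some v := by rw [← hc2, hp]
      exact Option.some_injective _ this
    subst hcv
    rcases hc1.cases_head with h | ⟨d, hd1, hd2⟩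
    · exact hvu h.symm
    · exact hv (Relation.TransGen.head' hd1 hd2)
  have houtdeg : ∀ v : {x : V // ¬ Relation.TransGen (fun a c => F.parent c = some a) u x},
      v.1 ≠ u → H.outDeg v = F.outDeg v.1 := by
    intro v hvu
    refine Nat.card_congr ⟨fun w => ⟨w.1.1, by exact (hH _ _).mp w.2⟩,
      fun w => ⟨⟨w.1, hchild v.1 w.1 v.2 hvu w.2⟩, by exact (hH _ _).mpr w.2⟩,
      fun w => rfl, fun w => rfl⟩
  have huleaf : ¬ F.IsLeaf u := by
    intro h; rw [RDForest.IsLeaf] at h; rw [RDForest.IsBranching, h] at hu; omega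
  have hbL : b = ({x | Relation.ReflTransGen (fun a c => F.parent c = some a) u x ∧
      F.IsLeaf x} : Set V).ncard := by rw [hb, ← Nat.card_coe_set_eq]
  have hLD : ∀ x, x ∈ ({x | Relation.ReflTransGen (fun a c => F.parent c = some a) u x ∧
      F.IsLeaf x} : Set V) → Relation.TransGen (fun a c => F.parent c = some a) u x := by
    rintro x ⟨hx1, hx2⟩
    rcases hx1.cases_head with h | ⟨c, hc1, hc2⟩
    · exact absurd (h ▸ hx2) huleaf
    · exact Relation.TransGen.head' hc1 hc2
  -- Part 1: Q is a BPVC of H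
  have part1 : H.IsBPVC k ({x | x.1 ∈ P} ∪ {⟨u, F.acyclic u⟩}) := by
    constructor
    · intro v hv
      by_cases hvu : v.1 = u
      · have : v = ⟨u, F.acyclic u⟩ := Subtype.ext (by exact hvu)
        exact Set.mem_union_right _ (by rw [this]; rfl)
      · refine Set.mem_union_left _ ?_
        have : F.IsLeaf v.1 := by
          rw [RDForest.IsLeaf, ← houtdeg v hvu]; exact hv
        exact hP.1 v.1 this
    · intro p hp
      have hq : F.IsDPath k (fun i => (p i).1) := fun i hi => (hH _ _).mp (hp i hi)
      rcases hP.2 _ hq with ⟨i, hi, hbr⟩ | ⟨i, hi, hmem⟩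
      · by_cases hvu : (p i).1 = u
        · refine Or.inr ⟨i, hi, Set.mem_union_right _ ?_⟩
          rw [show p i = ⟨u, F.acyclic u⟩ from Subtype.ext (by exact hvu)]; rfl
        · exact Or.inl ⟨i, hi, by rw [RDForest.IsBranching, houtdeg _ hvu]; exact hbr⟩
      · exact Or.inr ⟨i, hi, Set.mem_union_left _ hmem⟩
  -- Part 2
  have part2 : ({x | x.1 ∈ P} ∪ {⟨u, F.acyclic u⟩} :
      Set {x : V // ¬ Relation.TransGen (fun a c => F.parent c = some a) u x}).ncard
      + (b - 1) ≤ P.ncard := by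
    have himg : Subtype.val '' ({x | x.1 ∈ P} ∪ {⟨u, F.acyclic u⟩} :
        Set {x : V // ¬ Relation.TransGen (fun a c => F.parent c = some a) u x}) =
        (P ∩ {x | ¬ Relation.TransGen (fun a c => F.parent c = some a) u x}) ∪ {u} := by
      ext x
      constructor
      · rintro ⟨y, hy | hy, rfl⟩
        · exact Or.inl ⟨hy, y.2⟩
        · right; simp only [Set.mem_singleton_iff] at hy ⊢; rw [hy]
      · rintro (⟨hx1, hx2⟩ | hx)
        · exact ⟨⟨x, hx2⟩, Or.inl hx1, rfl⟩
        · exact ⟨⟨u, F.acyclic u⟩, Or.inr rfl, hx.symm⟩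
    have hQcard : ({x | x.1 ∈ P} ∪ {⟨u, F.acyclic u⟩} :
        Set {x : V // ¬ Relation.TransGen (fun a c => F.parent c = some a) u x}).ncard =
        ((P ∩ {x | ¬ Relation.TransGen (fun a c => F.parent c = some a) u x}) ∪ {u}).ncard := by
      rw [← himg, Set.ncard_image_of_injective _ Subtype.val_injective]
    have h1 : ((P ∩ {x | ¬ Relation.TransGen (fun a c => F.parent c = some a) u x}) ∪
        {u}).ncard ≤
        (P ∩ {x | ¬ Relation.TransGen (fun a c => F.parent c = some a) u x}).ncard + 1 := by
      refine le_trans (Set.ncard_union_le _ _) ?_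
      simp
    have h2 : (P ∩ {x | ¬ Relation.TransGen (fun a c => F.parent c = some a) u x}).ncard + b
        ≤ P.ncard := by
      rw [hbL, ← Set.ncard_union_eq ?_ (Set.toFinite _) (Set.toFinite _)]
      · refine Set.ncard_le_ncard ?_ (Set.toFinite _)
        rintro x (⟨hx, _⟩ | hx)
        · exact hx
        · exact hP.1 x hx.2
      · rw [Set.disjoint_iff]
        rintro x ⟨⟨_, hx2⟩, hx3⟩
        exact absurd (hLD x hx3) hx2
    omega
  -- Part 3
  have hA : ∀ l ∈ ({x | Relation.ReflTransGen (fun a c => F.parent c = some a) u x ∧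
        F.IsLeaf x} : Set V),
      ({x | Relation.TransGen (fun a c => F.parent c = some a) u x ∧
        Relation.ReflTransGen (fun a c => F.parent c = some a) x l}).ncard ≤ k := by
    intro l hl
    obtain ⟨m, p, h0, hm, hstep⟩ := path_of_rtg hl.1
    obtain ⟨hmk, -⟩ := hpaths m p h0 hstep (hm ▸ hl.2)
    have hclaim : ∀ x, Relation.ReflTransGen (fun a c => F.parent c = some a) x l →
        (∃ i ≤ m, x = p i) ∨ Relation.ReflTransGen (fun a c => F.parent c = some a) x u := by
      intro x hx
      induction hx using Relation.ReflTransGen.head_induction_on with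
      | refl => exact Or.inl ⟨m, le_refl m, hm.symm⟩
      | head hxy _ ih =>
        rename_i x' y' _
        rcases ih with ⟨i, him, rfl⟩ | h
        · rcases Nat.eq_zero_or_pos i with rfl | hi
          · exact Or.inr (Relation.ReflTransGen.single (h0 ▸ hxy))
          · left
            refine ⟨i - 1, by omega, ?_⟩
            have h1 := hstep (i - 1) (by omega)
            rw [show i - 1 + 1 = i from by omega] at h1
            have : some x' = some (p (i - 1)) := by rw [← hxy, h1]
            exact Option.some_injective _ this
        · exact Or.inr (Relation.ReflTransGen.head hxy h)
    have hsub : {x | Relation.TransGen (fun a c => F.parent c = some a) u x ∧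
        Relation.ReflTransGen (fun a c => F.parent c = some a) x l} ⊆
        p '' ((Finset.Icc 1 m : Finset ℕ) : Set ℕ) := by
      rintro x ⟨hx1, hx2⟩
      rcases hclaim x hx2 with ⟨i, him, rfl⟩ | h
      · rcases Nat.eq_zero_or_pos i with rfl | hi
        · exact absurd (h0 ▸ hx1) (F.acyclic u)
        · exact ⟨i, by simp [Finset.mem_Icc]; omega, rfl⟩
      · exact absurd (hx1.trans_left h) (F.acyclic u)
    calc ({x | Relation.TransGen (fun a c => F.parent c = some a) u x ∧
          Relation.ReflTransGen (fun a c => F.parent c = some a) x l}).ncard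
        ≤ (p '' ((Finset.Icc 1 m : Finset ℕ) : Set ℕ)).ncard :=
          Set.ncard_le_ncard hsub (Set.toFinite _)
      _ ≤ ((Finset.Icc 1 m : Finset ℕ) : Set ℕ).ncard := Set.ncard_image_le (Set.toFinite _)
      _ = m := by rw [Set.ncard_coe_finset, Nat.card_Icc]; omega
      _ ≤ k := hmk
  have hDcard : ({x | Relation.TransGen (fun a c => F.parent c = some a) u x} :
      Set V).ncard ≤ b * k := by
    choose g hg1 hg2 using fun x => exists_leaf F x
    have hDsub : ({x | Relation.TransGen (fun a c => F.parent c = some a) u x} : Set V) ⊆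
        ⋃ l ∈ (Set.toFinite ({x | Relation.ReflTransGen (fun a c => F.parent c = some a) u x ∧
          F.IsLeaf x} : Set V)).toFinset,
        {x | Relation.TransGen (fun a c => F.parent c = some a) u x ∧
          Relation.ReflTransGen (fun a c => F.parent c = some a) x l} := by
      intro x hx
      have hgx : Relation.ReflTransGen (fun a c => F.parent c = some a) u (g x) ∧
          F.IsLeaf (g x) := ⟨(Relation.TransGen.to_reflTransGen hx).trans (hg1 x), hg2 x⟩
      exact Set.mem_biUnion ((Set.Finite.mem_toFinset _).mpr hgx) ⟨hx, hg1 x⟩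
    calc ({x | Relation.TransGen (fun a c => F.parent c = some a) u x} : Set V).ncard
        ≤ (⋃ l ∈ (Set.toFinite ({x | Relation.ReflTransGen
            (fun a c => F.parent c = some a) u x ∧ F.IsLeaf x} : Set V)).toFinset,
          {x | Relation.TransGen (fun a c => F.parent c = some a) u x ∧
            Relation.ReflTransGen (fun a c => F.parent c = some a) x l}).ncard :=
        Set.ncard_le_ncard hDsub (Set.toFinite _)
      _ ≤ ∑ l ∈ (Set.toFinite ({x | Relation.ReflTransGen
            (fun a c => F.parent c = some a) u x ∧ F.IsLeaf x} : Set V)).toFinset,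
          ({x | Relation.TransGen (fun a c => F.parent c = some a) u x ∧
            Relation.ReflTransGen (fun a c => F.parent c = some a) x l}).ncard :=
        ncard_biUnion_le' _ _
      _ ≤ ∑ _l ∈ (Set.toFinite ({x | Relation.ReflTransGen
            (fun a c => F.parent c = some a) u x ∧ F.IsLeaf x} : Set V)).toFinset, k := by
        refine Finset.sum_le_sum ?_
        intro l hl
        exact hA l ((Set.Finite.mem_toFinset _).mp hl)
      _ = (Set.toFinite ({x | Relation.ReflTransGen
            (fun a c => F.parent c = some a) u x ∧ F.IsLeaf x} : Set V)).toFinset.card * k := by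
        rw [Finset.sum_const, smul_eq_mul]
      _ = b * k := by rw [← Set.ncard_eq_toFinset_card _, hbL]
  have part3 : Nat.card V - b * k ≤
      Nat.card {x : V // ¬ Relation.TransGen (fun a c => F.parent c = some a) u x} := by
    have h1 : Nat.card {x : V // ¬ Relation.TransGen (fun a c => F.parent c = some a) u x} =
        ({x | Relation.TransGen (fun a c => F.parent c = some a) u x} : Set V)ᶜ.ncard := by
      rw [← Nat.card_coe_set_eq]; rfl
    have h2 := Set.ncard_add_ncard_compl
      ({x | Relation.TransGen (fun a c => F.parent c = some a) u x} : Set V)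
      (Set.toFinite _) (Set.toFinite _)
    omega
  exact ⟨part1, part2, part3⟩
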